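/- Let z ∈ Z(U(sl₂)) be the parameter of H_z. For all w, w' ∈ Z(U(sl₂)) there exists w₀ ∈ Z(U(sl₂)) such that [w₀, x] = w·x·w' − w'·x·w in H_z (equivalently [w₀,x] = w'[w,x] − w[w',x]). Moreover, if w = c₁Δ^m + (terms of lower degree in Δ) and w' = c₂Δⁿ + (terms of lower degree in Δ) with m + n ≥ 1, then w₀ can be chosen of the form c₁c₂·((m−n)/(m+n))·Δ^{m+n} + (terms of lower degree in Δ). -/

import Mathlib

open Polynomial

inductive HGen : Type | E | F | H | X | Y

noncomputable section

namespace InfHecke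

variable (k : Type) [Field k]

abbrev FA := FreeAlgebra k HGen

def fe : FA k := FreeAlgebra.ι k HGen.E
def ff : FA k := FreeAlgebra.ι k HGen.F
def fh : FA k := FreeAlgebra.ι k HGen.H
def fx : FA k := FreeAlgebra.ι k HGen.X
def fy : FA k := FreeAlgebra.ι k HGen.Y

/-- (a multiple of) the Casimir element, in the free algebra. -/
def fΔ : FA k := fh k * fh k + 4 * (fe k * ff k) - 2 * fh k

/-- The defining relations of the infinitesimal Hecke algebra `H_z` of `sl₂`,
with deformation parameter `z = p(Δ)` for a polynomial `p`. -/
inductive Rel (p : Polynomial k) : FA k → FA k → Prop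
  | he : Rel p (fh k * fe k - fe k * fh k) (2 * fe k)
  | hf : Rel p (fh k * ff k - ff k * fh k) (-(2 * ff k))
  | ef : Rel p (fe k * ff k - ff k * fe k) (fh k)
  | ex : Rel p (fe k * fx k - fx k * fe k) 0
  | ey : Rel p (fe k * fy k - fy k * fe k) (fx k)
  | fxr : Rel p (ff k * fx k - fx k * ff k) (fy k)
  | fyr : Rel p (ff k * fy k - fy k * ff k) 0
  | hx : Rel p (fh k * fx k - fx k * fh k) (fx k)
  | hy : Rel p (fh k * fy k - fy k * fh k) (-(fy k))
  | xy : Rel p (fx k * fy k - fy k * fx k) (Polynomial.aeval (fΔ k) p)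

/-- The infinitesimal Hecke algebra `H_z` of `sl₂`, with `z = p(Δ)`. -/
abbrev Hecke (p : Polynomial k) := RingQuot (Rel k p)

variable (p : Polynomial k)

def eH : Hecke k p := (RingQuot.mkAlgHom k (Rel k p)) (fe k)
def fH : Hecke k p := (RingQuot.mkAlgHom k (Rel k p)) (ff k)
def hH : Hecke k p := (RingQuot.mkAlgHom k (Rel k p)) (fh k)
def xH : Hecke k p := (RingQuot.mkAlgHom k (Rel k p)) (fx k)
def yH : Hecke k p := (RingQuot.mkAlgHom k (Rel k p)) (fy k)

/-- The Casimir element `Δ = h² + 4ef − 2h` in `H_z`. -/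
def ΔH : Hecke k p := (RingQuot.mkAlgHom k (Rel k p)) (fΔ k)

/-- The deformation parameter `z = p(Δ)`, as an element of `H_z`. -/
def zH : Hecke k p := Polynomial.aeval (ΔH k p) p

/-- The element `t = ey² + hxy − fx²`. -/
def tH : Hecke k p := eH k p * yH k p ^ 2 + hH k p * xH k p * yH k p - fH k p * xH k p ^ 2

/-- The polynomial representing `q_z = (1/4)(z − Δz − z₀)`, where `z₀ = p0(Δ)`. -/
def qpoly (p0 : Polynomial k) : Polynomial k :=
  Polynomial.C (1/4 : k) * (p - Polynomial.X * p - p0)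

/-- The condition that `z₀ = p0(Δ)` satisfies `[z₀, x] = Δxz − zxΔ` in `H_z`. -/
def IsZ0 (p0 : Polynomial k) : Prop :=
  Polynomial.aeval (ΔH k p) p0 * xH k p - xH k p * Polynomial.aeval (ΔH k p) p0
    = ΔH k p * xH k p * zH k p - zH k p * xH k p * ΔH k p

/-- The central element `t_z = t − (1/2)hz − q_z` of `H_z`. -/
def tz (p0 : Polynomial k) : Hecke k p :=
  tH k p - (1/2 : k) • (hH k p * zH k p) - Polynomial.aeval (ΔH k p) (qpoly k p p0)

/-- The polynomial `φ_z(s) = ((1/2)s + 1)·z(s²+2s) − q_z(s²+2s)`. -/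
def phiz (p0 : Polynomial k) : Polynomial k :=
  (Polynomial.C (1/2 : k) * Polynomial.X + 1) * p.comp (Polynomial.X ^ 2 + 2 * Polynomial.X)
    - (qpoly k p p0).comp (Polynomial.X ^ 2 + 2 * Polynomial.X)

/-- The left ideal of `H_z` generated by `e`, `x` and `h − λ`. -/
def VermaIdeal (lam : k) : Ideal (Hecke k p) :=
  Ideal.span {eH k p, xH k p, hH k p - algebraMap k (Hecke k p) lam}

/-- The Verma module `M(λ)` over `H_z`. -/
abbrev Verma (lam : k) := Hecke k p ⧸ VermaIdeal k p lam

/-- The (unique) maximal proper submodule of the Verma module `M(λ)`. -/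
def VermaRad (lam : k) : Submodule (Hecke k p) (Verma k p lam) :=
  sSup {N : Submodule (Hecke k p) (Verma k p lam) | N ≠ ⊤}

/-- The simple highest-weight module `V(λ)`, the irreducible quotient of `M(λ)`. -/
abbrev SimpleQuot (lam : k) := Verma k p lam ⧸ VermaRad k p lam

/-- The `k`-linear span of all commutators `ab − ba` in `H_z`. -/
def commSpace : Submodule k (Hecke k p) :=
  Submodule.span k {c : Hecke k p | ∃ a b : Hecke k p, c = a * b - b * a}

/-- The polynomials `f_n` (for `n ≥ 1`), defined together with `g_n` by the mutual
recursion `f₁ = 2`, `g₁ = −3`, `f_{n+1} = 2Tⁿ + (T−1)f_n − 2g_n`,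
`g_{n+1} = −3Tⁿ + (T+3)g_n − 2T·f_n`. -/
def fgAux : ℕ → Polynomial k × Polynomial k
  | 0 => (Polynomial.C 2, Polynomial.C (-3))
  | n + 1 =>
      ((2 : Polynomial k) * Polynomial.X ^ (n + 1)
          + (Polynomial.X - 1) * (fgAux n).1 - 2 * (fgAux n).2,
        (-3 : Polynomial k) * Polynomial.X ^ (n + 1)
          + (Polynomial.X + 3) * (fgAux n).2 - 2 * Polynomial.X * (fgAux n).1)

def fP (n : ℕ) : Polynomial k := (fgAux k (n - 1)).1
def gP (n : ℕ) : Polynomial k := (fgAux k (n - 1)).2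


set_option linter.unusedSectionVars false
set_option linter.unreachableTactic false
set_option linter.unusedTactic false
set_option linter.unusedVariables false
set_option maxHeartbeats 1000000

theorem mul_cont {R : Type*} [Ring R] {a b c : R} (hab : a*b = c) (t : R) :
    a*(b*t) = c*t := by rw [← mul_assoc, hab]

section Abstract
variable {R : Type*} [Ring R] (e f h x y D : R)

section
variable (he : h*e = e*h + 2*e) (hf : h*f = f*h - 2*f) (ef : e*f = f*e + h)
  (ex : e*x = x*e) (ey : e*y = y*e + x) (fx : f*x = x*f + y) (fy : f*y = y*f)
  (hx : h*x = x*h + x) (hy : h*y = y*h - y)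
  (hD : D = h*h + 4*(e*f) - 2*h)

include he hf ef ex ey fx fy hx hy hD

theorem comm_De : D*e = e*D := by
  subst hD
  simp only [zsmul_eq_mul, nsmul_eq_mul, Nat.cast_ofNat, Int.cast_ofNat, Int.reduceNeg, Int.cast_neg, Int.cast_one, mul_add, add_mul, mul_sub, sub_mul, mul_assoc, he, hf, ef, ex, ey, fx, fy, hx, hy, mul_cont he, mul_cont hf, mul_cont ef, mul_cont ex, mul_cont ey, mul_cont fx, mul_cont fy, mul_cont hx, mul_cont hy]
  all_goals (try noncomm_ring)
  all_goals (try simp only [zsmul_eq_mul, nsmul_eq_mul, Nat.cast_ofNat, Int.cast_ofNat, Int.reduceNeg, Int.cast_neg, Int.cast_one, mul_add, add_mul, mul_sub, sub_mul, mul_assoc, he, hf, ef, ex, ey, fx, fy, hx, hy, mul_cont he, mul_cont hf, mul_cont ef, mul_cont ex, mul_cont ey, mul_cont fx, mul_cont fy, mul_cont hx, mul_cont hy])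
  all_goals (try noncomm_ring)
  all_goals (try simp only [zsmul_eq_mul, nsmul_eq_mul, Nat.cast_ofNat, Int.cast_ofNat, Int.reduceNeg, Int.cast_neg, Int.cast_one, mul_add, add_mul, mul_sub, sub_mul, mul_assoc, he, hf, ef, ex, ey, fx, fy, hx, hy, mul_cont he, mul_cont hf, mul_cont ef, mul_cont ex, mul_cont ey, mul_cont fx, mul_cont fy, mul_cont hx, mul_cont hy])
  all_goals (try noncomm_ring)

theorem comm_Df : D*f = f*D := by
  subst hD
  simp only [zsmul_eq_mul, nsmul_eq_mul, Nat.cast_ofNat, Int.cast_ofNat, Int.reduceNeg, Int.cast_neg, Int.cast_one, mul_add, add_mul, mul_sub, sub_mul, mul_assoc, he, hf, ef, ex, ey, fx, fy, hx, hy, mul_cont he, mul_cont hf, mul_cont ef, mul_cont ex, mul_cont ey, mul_cont fx, mul_cont fy, mul_cont hx, mul_cont hy]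
  all_goals (try noncomm_ring)
  all_goals (try simp only [zsmul_eq_mul, nsmul_eq_mul, Nat.cast_ofNat, Int.cast_ofNat, Int.reduceNeg, Int.cast_neg, Int.cast_one, mul_add, add_mul, mul_sub, sub_mul, mul_assoc, he, hf, ef, ex, ey, fx, fy, hx, hy, mul_cont he, mul_cont hf, mul_cont ef, mul_cont ex, mul_cont ey, mul_cont fx, mul_cont fy, mul_cont hx, mul_cont hy])
  all_goals (try noncomm_ring)
  all_goals (try simp only [zsmul_eq_mul, nsmul_eq_mul, Nat.cast_ofNat, Int.cast_ofNat, Int.reduceNeg, Int.cast_neg, Int.cast_one, mul_add, add_mul, mul_sub, sub_mul, mul_assoc, he, hf, ef, ex, ey, fx, fy, hx, hy, mul_cont he, mul_cont hf, mul_cont ef, mul_cont ex, mul_cont ey, mul_cont fx, mul_cont fy, mul_cont hx, mul_cont hy])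
  all_goals (try noncomm_ring)

theorem comm_Dh : D*h = h*D := by
  subst hD
  simp only [zsmul_eq_mul, nsmul_eq_mul, Nat.cast_ofNat, Int.cast_ofNat, Int.reduceNeg, Int.cast_neg, Int.cast_one, mul_add, add_mul, mul_sub, sub_mul, mul_assoc, he, hf, ef, ex, ey, fx, fy, hx, hy, mul_cont he, mul_cont hf, mul_cont ef, mul_cont ex, mul_cont ey, mul_cont fx, mul_cont fy, mul_cont hx, mul_cont hy]
  all_goals (try noncomm_ring)
  all_goals (try simp only [zsmul_eq_mul, nsmul_eq_mul, Nat.cast_ofNat, Int.cast_ofNat, Int.reduceNeg, Int.cast_neg, Int.cast_one, mul_add, add_mul, mul_sub, sub_mul, mul_assoc, he, hf, ef, ex, ey, fx, fy, hx, hy, mul_cont he, mul_cont hf, mul_cont ef, mul_cont ex, mul_cont ey, mul_cont fx, mul_cont fy, mul_cont hx, mul_cont hy])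
  all_goals (try noncomm_ring)
  all_goals (try simp only [zsmul_eq_mul, nsmul_eq_mul, Nat.cast_ofNat, Int.cast_ofNat, Int.reduceNeg, Int.cast_neg, Int.cast_one, mul_add, add_mul, mul_sub, sub_mul, mul_assoc, he, hf, ef, ex, ey, fx, fy, hx, hy, mul_cont he, mul_cont hf, mul_cont ef, mul_cont ex, mul_cont ey, mul_cont fx, mul_cont fy, mul_cont hx, mul_cont hy])
  all_goals (try noncomm_ring)

theorem rel_dx : D*x = x*D + 2*(x*h) + 4*(y*e) + 3*x := by
  subst hD
  simp only [zsmul_eq_mul, nsmul_eq_mul, Nat.cast_ofNat, Int.cast_ofNat, Int.reduceNeg, Int.cast_neg, Int.cast_one, mul_add, add_mul, mul_sub, sub_mul, mul_assoc, he, hf, ef, ex, ey, fx, fy, hx, hy, mul_cont he, mul_cont hf, mul_cont ef, mul_cont ex, mul_cont ey, mul_cont fx, mul_cont fy, mul_cont hx, mul_cont hy]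
  all_goals (try noncomm_ring)
  all_goals (try simp only [zsmul_eq_mul, nsmul_eq_mul, Nat.cast_ofNat, Int.cast_ofNat, Int.reduceNeg, Int.cast_neg, Int.cast_one, mul_add, add_mul, mul_sub, sub_mul, mul_assoc, he, hf, ef, ex, ey, fx, fy, hx, hy, mul_cont he, mul_cont hf, mul_cont ef, mul_cont ex, mul_cont ey, mul_cont fx, mul_cont fy, mul_cont hx, mul_cont hy])
  all_goals (try noncomm_ring)
  all_goals (try simp only [zsmul_eq_mul, nsmul_eq_mul, Nat.cast_ofNat, Int.cast_ofNat, Int.reduceNeg, Int.cast_neg, Int.cast_one, mul_add, add_mul, mul_sub, sub_mul, mul_assoc, he, hf, ef, ex, ey, fx, fy, hx, hy, mul_cont he, mul_cont hf, mul_cont ef, mul_cont ex, mul_cont ey, mul_cont fx, mul_cont fy, mul_cont hx, mul_cont hy])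
  all_goals (try noncomm_ring)

theorem rel_dy : D*y = y*D - 2*(y*h) + 4*(x*f) + 3*y := by
  subst hD
  simp only [zsmul_eq_mul, nsmul_eq_mul, Nat.cast_ofNat, Int.cast_ofNat, Int.reduceNeg, Int.cast_neg, Int.cast_one, mul_add, add_mul, mul_sub, sub_mul, mul_assoc, he, hf, ef, ex, ey, fx, fy, hx, hy, mul_cont he, mul_cont hf, mul_cont ef, mul_cont ex, mul_cont ey, mul_cont fx, mul_cont fy, mul_cont hx, mul_cont hy]
  all_goals (try noncomm_ring)
  all_goals (try simp only [zsmul_eq_mul, nsmul_eq_mul, Nat.cast_ofNat, Int.cast_ofNat, Int.reduceNeg, Int.cast_neg, Int.cast_one, mul_add, add_mul, mul_sub, sub_mul, mul_assoc, he, hf, ef, ex, ey, fx, fy, hx, hy, mul_cont he, mul_cont hf, mul_cont ef, mul_cont ex, mul_cont ey, mul_cont fx, mul_cont fy, mul_cont hx, mul_cont hy])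
  all_goals (try noncomm_ring)
  all_goals (try simp only [zsmul_eq_mul, nsmul_eq_mul, Nat.cast_ofNat, Int.cast_ofNat, Int.reduceNeg, Int.cast_neg, Int.cast_one, mul_add, add_mul, mul_sub, sub_mul, mul_assoc, he, hf, ef, ex, ey, fx, fy, hx, hy, mul_cont he, mul_cont hf, mul_cont ef, mul_cont ex, mul_cont ey, mul_cont fx, mul_cont fy, mul_cont hx, mul_cont hy])
  all_goals (try noncomm_ring)

theorem rel_psi : D*(D*x) - D*x*(2*D+2) + x*(D*D - 2*D - 3) = 0 := by
  subst hD
  simp only [zsmul_eq_mul, nsmul_eq_mul, Nat.cast_ofNat, Int.cast_ofNat, Int.reduceNeg, Int.cast_neg, Int.cast_one, mul_add, add_mul, mul_sub, sub_mul, mul_assoc, he, hf, ef, ex, ey, fx, fy, hx, hy, mul_cont he, mul_cont hf, mul_cont ef, mul_cont ex, mul_cont ey, mul_cont fx, mul_cont fy, mul_cont hx, mul_cont hy]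
  all_goals (try noncomm_ring)
  all_goals (try simp only [zsmul_eq_mul, nsmul_eq_mul, Nat.cast_ofNat, Int.cast_ofNat, Int.reduceNeg, Int.cast_neg, Int.cast_one, mul_add, add_mul, mul_sub, sub_mul, mul_assoc, he, hf, ef, ex, ey, fx, fy, hx, hy, mul_cont he, mul_cont hf, mul_cont ef, mul_cont ex, mul_cont ey, mul_cont fx, mul_cont fy, mul_cont hx, mul_cont hy])
  all_goals (try noncomm_ring)
  all_goals (try simp only [zsmul_eq_mul, nsmul_eq_mul, Nat.cast_ofNat, Int.cast_ofNat, Int.reduceNeg, Int.cast_neg, Int.cast_one, mul_add, add_mul, mul_sub, sub_mul, mul_assoc, he, hf, ef, ex, ey, fx, fy, hx, hy, mul_cont he, mul_cont hf, mul_cont ef, mul_cont ex, mul_cont ey, mul_cont fx, mul_cont fy, mul_cont hx, mul_cont hy])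
  all_goals (try noncomm_ring)
  all_goals (try simp only [zsmul_eq_mul, nsmul_eq_mul, Nat.cast_ofNat, Int.cast_ofNat, Int.reduceNeg, Int.cast_neg, Int.cast_one, mul_add, add_mul, mul_sub, sub_mul, mul_assoc, he, hf, ef, ex, ey, fx, fy, hx, hy, mul_cont he, mul_cont hf, mul_cont ef, mul_cont ex, mul_cont ey, mul_cont fx, mul_cont fy, mul_cont hx, mul_cont hy])
  all_goals (try noncomm_ring)

end
end Abstract

-- relation lemmas
lemma heH : hH k p * eH k p = eH k p * hH k p + 2 * eH k p := by
  have h2 := RingQuot.mkAlgHom_rel k (Rel.he (p := p))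
  simp only [map_sub, map_mul, map_ofNat] at h2
  unfold hH eH
  rw [sub_eq_iff_eq_add] at h2
  exact h2.trans (add_comm _ _)

lemma hfH : hH k p * fH k p = fH k p * hH k p - 2 * fH k p := by
  have h2 := RingQuot.mkAlgHom_rel k (Rel.hf (p := p))
  simp only [map_sub, map_mul, map_neg, map_ofNat] at h2
  unfold hH fH
  rw [sub_eq_iff_eq_add] at h2
  rw [h2]; abel

lemma efH : eH k p * fH k p = fH k p * eH k p + hH k p := by
  have h2 := RingQuot.mkAlgHom_rel k (Rel.ef (p := p))
  simp only [map_sub, map_mul] at h2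
  unfold hH eH fH
  rw [sub_eq_iff_eq_add] at h2
  exact h2.trans (add_comm _ _)

lemma exH : eH k p * xH k p = xH k p * eH k p := by
  have h2 := RingQuot.mkAlgHom_rel k (Rel.ex (p := p))
  simp only [map_sub, map_mul, map_zero] at h2
  unfold eH xH
  exact sub_eq_zero.mp h2

lemma eyH : eH k p * yH k p = yH k p * eH k p + xH k p := by
  have h2 := RingQuot.mkAlgHom_rel k (Rel.ey (p := p))
  simp only [map_sub, map_mul] at h2
  unfold eH yH xH
  rw [sub_eq_iff_eq_add] at h2
  exact h2.trans (add_comm _ _)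

lemma fxH : fH k p * xH k p = xH k p * fH k p + yH k p := by
  have h2 := RingQuot.mkAlgHom_rel k (Rel.fxr (p := p))
  simp only [map_sub, map_mul] at h2
  unfold fH xH yH
  rw [sub_eq_iff_eq_add] at h2
  exact h2.trans (add_comm _ _)

lemma fyH : fH k p * yH k p = yH k p * fH k p := by
  have h2 := RingQuot.mkAlgHom_rel k (Rel.fyr (p := p))
  simp only [map_sub, map_mul, map_zero] at h2
  unfold fH yH
  exact sub_eq_zero.mp h2

lemma hxH : hH k p * xH k p = xH k p * hH k p + xH k p := by
  have h2 := RingQuot.mkAlgHom_rel k (Rel.hx (p := p))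
  simp only [map_sub, map_mul] at h2
  unfold hH xH
  rw [sub_eq_iff_eq_add] at h2
  exact h2.trans (add_comm _ _)

lemma hyH : hH k p * yH k p = yH k p * hH k p - yH k p := by
  have h2 := RingQuot.mkAlgHom_rel k (Rel.hy (p := p))
  simp only [map_sub, map_mul, map_neg] at h2
  unfold hH yH
  rw [sub_eq_iff_eq_add] at h2
  rw [h2]; abel

lemma ΔH_def : ΔH k p = hH k p * hH k p + 4 * (eH k p * fH k p) - 2 * hH k p := by
  unfold ΔH fΔ hH eH fH
  simp only [map_sub, map_add, map_mul, map_ofNat]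


def Sw : Polynomial k := X^2 - X - C (3/4)
def Tw : Polynomial k := X^2 + X - C (3/4)

lemma c34 [CharZero k] : (4 : Polynomial k) * C (3/4 : k) = 3 := by
  rw [← map_ofNat (C : k →+* Polynomial k) 4, ← map_ofNat (C : k →+* Polynomial k) 3, ← C_mul, show (4:k)*(3/4) = 3 from by norm_num]


lemma q_theta_zero [CharZero k] :
    Tw k^2 - (2*Sw k+2)*Tw k + (Sw k^2 - 2*Sw k - 3) = 0 := by
  unfold Sw Tw
  linear_combination c34 k

lemma Sw_comp_neg : (Sw k).comp (-X) = Tw k := by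
  unfold Sw Tw
  simp only [sub_comp, add_comp, pow_comp, X_comp, C_comp]
  ring

lemma Tw_comp_neg : (Tw k).comp (-X) = Sw k := by
  unfold Sw Tw
  simp only [sub_comp, add_comp, pow_comp, X_comp, C_comp]
  ring

lemma Sw_comp_refl : (Sw k).comp (1 - X) = Sw k := by
  unfold Sw
  simp only [sub_comp, add_comp, pow_comp, X_comp, C_comp, one_comp]
  ring

lemma Tw_comp_refl : (Tw k) - (Tw k).comp (1 - X) = 4*X - 2 := by
  unfold Tw
  simp only [sub_comp, add_comp, pow_comp, X_comp, C_comp, one_comp]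
  ring

lemma natDegree_Sw : (Sw k).natDegree = 2 := by unfold Sw; compute_degree!
lemma natDegree_Tw : (Tw k).natDegree = 2 := by unfold Tw; compute_degree!

lemma monic_Sw : (Sw k).Monic := by
  have h : Sw k = X^2 + (-X - C (3/4)) := by unfold Sw; ring
  rw [h]
  apply monic_X_pow_add
  exact lt_of_le_of_lt (by compute_degree : _ ≤ (1:WithBot ℕ)) (by norm_num)

lemma monic_Tw : (Tw k).Monic := by
  have h : Tw k = X^2 + (X - C (3/4)) := by unfold Tw; ring
  rw [h]
  apply monic_X_pow_add
  exact lt_of_le_of_lt (by compute_degree : _ ≤ (1:WithBot ℕ)) (by norm_num)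

lemma nextCoeff_Sw : (Sw k).nextCoeff = -1 := by
  rw [nextCoeff_of_natDegree_pos (by rw [natDegree_Sw]; norm_num), natDegree_Sw]
  unfold Sw
  simp [coeff_X]

lemma nextCoeff_Tw : (Tw k).nextCoeff = 1 := by
  rw [nextCoeff_of_natDegree_pos (by rw [natDegree_Tw]; norm_num), natDegree_Tw]
  unfold Tw
  simp [coeff_X]

lemma coeff_TS_pow (m n : ℕ) (h : 1 ≤ m + n) :
    (Tw k^m * Sw k^n).coeff (2*(m+n)-1) = (m:k) - n := by
  have hmon : (Tw k^m * Sw k^n).Monic := ((monic_Tw k).pow m).mul ((monic_Sw k).pow n)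
  have hdeg : (Tw k^m * Sw k^n).natDegree = 2*(m+n) := by
    rw [Polynomial.Monic.natDegree_mul ((monic_Tw k).pow m) ((monic_Sw k).pow n),
      natDegree_pow, natDegree_pow, natDegree_Sw, natDegree_Tw]
    ring
  have hnext := Polynomial.Monic.nextCoeff_mul ((monic_Tw k).pow m) ((monic_Sw k).pow n)
  rw [Monic.nextCoeff_pow (monic_Tw k), Monic.nextCoeff_pow (monic_Sw k),
    nextCoeff_Sw, nextCoeff_Tw] at hnext
  rw [show 2*(m+n)-1 = (Tw k ^ m * Sw k ^ n).natDegree - 1 from by rw [hdeg],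
    ← nextCoeff_of_natDegree_pos (by rw [hdeg]; omega), hnext]
  push_cast
  ring


lemma oddCoeff (F : Polynomial k) (j : ℕ) :
    (F.comp (-X)).coeff j = (-1)^j * F.coeff j := by
  induction F using Polynomial.induction_on' with
  | add a b iha ihb => rw [add_comp, coeff_add, iha, ihb, coeff_add, mul_add]
  | monomial n a =>
      rw [← C_mul_X_pow_eq_monomial, mul_comp, pow_comp, C_comp, X_comp]
      rw [neg_pow, coeff_C_mul, mul_comm ((-1:Polynomial k)^n) (X^n)]
      rw [show ((-1:Polynomial k))^n = C ((-1:k)^n) from by rw [← C_1, ← C_neg, ← C_pow],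
        coeff_mul_C, coeff_C_mul, coeff_X_pow]
      split_ifs with hnj
      · subst hnj; ring
      · ring

lemma even_coeff_zero [CharZero k] {F : Polynomial k} (hodd : F.comp (-X) = -F) {j : ℕ} (hj : Even j) :
    F.coeff j = 0 := by
  have h1 := oddCoeff k F j
  rw [hodd, coeff_neg, hj.neg_one_pow, one_mul] at h1
  linear_combination -h1 / 2

lemma theta_lin_inj [CharZero k] {a b : Polynomial k} (hab : a.comp (Sw k) + b.comp (Sw k) * Tw k = 0) :
    a = 0 ∧ b = 0 := by
  have h2 : a.comp (Sw k) + b.comp (Sw k) * (Tw k).comp (1 - X) = 0 := by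
    have := congrArg (fun q => q.comp (1 - X)) hab
    simpa only [add_comp, mul_comp, comp_assoc, Sw_comp_refl, zero_comp] using this
  have h3 : b.comp (Sw k) * (4*X - 2) = 0 := by
    rw [← Tw_comp_refl k]
    linear_combination hab - h2
  have h4 : (4*X - 2 : Polynomial k) ≠ 0 := by
    intro hc
    have h5 := congrArg (fun q => coeff q 1) hc
    simp at h5
  have hb : b.comp (Sw k) = 0 := by
    rcases mul_eq_zero.mp h3 with h | h
    · exact h
    · exact absurd h h4
  have hSnc : (Sw k).natDegree ≠ 0 := by rw [natDegree_Sw]; norm_num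
  have hb0 : b = 0 := by
    rcases comp_eq_zero_iff.mp hb with h | h
    · exact h
    · exact absurd (congrArg natDegree h.2) (by rw [natDegree_Sw, natDegree_C]; norm_num)
  refine ⟨?_, hb0⟩
  rw [hb0, zero_comp, zero_mul, add_zero] at hab
  rcases comp_eq_zero_iff.mp hab with h | h
  · exact h
  · exact absurd (congrArg natDegree h.2) (by rw [natDegree_Sw, natDegree_C]; norm_num)

lemma TS_pow_odd (i : ℕ) : ((Tw k^i - Sw k^i).comp (-X)) = -(Tw k^i - Sw k^i) := by
  rw [sub_comp, pow_comp, pow_comp, Sw_comp_neg, Tw_comp_neg]; ring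

lemma Tw_pow_natDegree (i : ℕ) : (Tw k^i).natDegree = 2*i := by
  rw [natDegree_pow, natDegree_Tw]; ring
lemma Sw_pow_natDegree (i : ℕ) : (Sw k^i).natDegree = 2*i := by
  rw [natDegree_pow, natDegree_Sw]; ring

lemma TS_pow_coeff_top (i : ℕ) : (Tw k^i - Sw k^i).coeff (2*i) = 0 := by
  have hT : (Tw k^i).coeff (2*i) = 1 := by
    rw [← Tw_pow_natDegree k i]; exact ((monic_Tw k).pow i).coeff_natDegree
  have hS : (Sw k^i).coeff (2*i) = 1 := by
    rw [← Sw_pow_natDegree k i]; exact ((monic_Sw k).pow i).coeff_natDegree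
  rw [coeff_sub, hT, hS, sub_self]

lemma TS_pow_coeff_next (i : ℕ) (hi : 1 ≤ i) :
    (Tw k^i - Sw k^i).coeff (2*i-1) = 2*(i:k) := by
  have hT : (Tw k^i).coeff (2*i-1) = (i:k) := by
    rw [show 2*i-1 = (Tw k^i).natDegree - 1 from by rw [Tw_pow_natDegree],
      ← nextCoeff_of_natDegree_pos (by rw [Tw_pow_natDegree]; omega),
      Monic.nextCoeff_pow (monic_Tw k), nextCoeff_Tw]
    simp
  have hS : (Sw k^i).coeff (2*i-1) = -(i:k) := by
    rw [show 2*i-1 = (Sw k^i).natDegree - 1 from by rw [Sw_pow_natDegree],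
      ← nextCoeff_of_natDegree_pos (by rw [Sw_pow_natDegree]; omega),
      Monic.nextCoeff_pow (monic_Sw k), nextCoeff_Sw]
    simp
  rw [coeff_sub, hT, hS]; ring

lemma TS_pow_natDeg (i : ℕ) : (Tw k^i - Sw k^i).natDegree ≤ 2*i :=
  le_trans (natDegree_sub_le _ _)
    (by rw [Tw_pow_natDegree, Sw_pow_natDegree]; omega)

lemma Bcore [CharZero k] : ∀ N : ℕ, 1 ≤ N → ∀ F : Polynomial k, F.comp (-X) = -F → F.natDegree ≤ 2*N - 1 →
    ∃ c0 : Polynomial k, c0.natDegree ≤ N ∧ c0.coeff N = F.coeff (2*N-1) / (2*(N:k)) ∧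
      c0.comp (Tw k) - c0.comp (Sw k) = F := by
  intro N hN
  induction N, hN using Nat.le_induction with
  | base =>
      intro F hodd hdeg
      have hdeg1 : F.natDegree ≤ 1 := by simpa using hdeg
      have h0 : F.coeff 0 = 0 := even_coeff_zero k hodd Even.zero
      have hF : F = C (F.coeff 1) * X := by
        conv_lhs => rw [eq_X_add_C_of_natDegree_le_one hdeg1]
        rw [h0, C_0, add_zero]
      refine ⟨C (F.coeff 1 / 2) * X, ?_, ?_, ?_⟩
      · refine le_trans (natDegree_mul_le) ?_
        simp [natDegree_C, natDegree_X]
      · rw [coeff_C_mul, coeff_X_one]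
        norm_num
      · rw [mul_comp, C_comp, X_comp, mul_comp, C_comp, X_comp, ← mul_sub,
          show Tw k - Sw k = 2*X from by unfold Tw Sw; try ring
          ,
          show (2:Polynomial k) = C (2:k) from (map_ofNat (C : k →+* Polynomial k) 2).symm,
          ← mul_assoc, ← C_mul, div_mul_cancel₀ _ (two_ne_zero)]
        exact hF.symm
  | succ N hN ih =>
      intro F hodd hdeg
      have hij : (2:k)*((N:k)+1) ≠ 0 := by
        have : ((N:k)+1) ≠ 0 := Nat.cast_add_one_ne_zero N
        exact mul_ne_zero two_ne_zero this
      have hGnext := TS_pow_coeff_next k (N+1) (by omega)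
      rw [show 2*(N+1)-1 = 2*N+1 from by omega] at hGnext
      have hGtop := TS_pow_coeff_top k (N+1)
      rw [show 2*(N+1) = 2*N+2 from by omega] at hGtop
      have hGdeg := TS_pow_natDeg k (N+1)
      have hFdeg : F.natDegree ≤ 2*N+1 := by
        refine le_trans hdeg ?_; omega
      set c : k := F.coeff (2*N+1) / (2*((N:k)+1)) with hcdef
      have hodd' : (F - C c * (Tw k^(N+1) - Sw k^(N+1))).comp (-X)
          = -(F - C c * (Tw k^(N+1) - Sw k^(N+1))) := by
        rw [sub_comp, mul_comp, C_comp, TS_pow_odd, hodd]; ring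
      have hFdeg' : (F - C c * (Tw k^(N+1) - Sw k^(N+1))).natDegree ≤ 2*N - 1 := by
        rw [natDegree_le_iff_coeff_eq_zero]
        intro M hM
        have hM' : 2*N ≤ M := by omega
        rw [coeff_sub, coeff_C_mul]
        by_cases hM1 : M = 2*N
        · subst hM1
          have h2 := even_coeff_zero k hodd' (even_two_mul N)
          rw [coeff_sub, coeff_C_mul] at h2
          exact h2
        by_cases hM2 : M = 2*N+1
        · subst hM2
          rw [hGnext]
          push_cast
          rw [hcdef, div_mul_cancel₀ _ hij, sub_self]
        by_cases hM3 : M = 2*N+2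
        · subst hM3
          rw [hGtop, coeff_eq_zero_of_natDegree_lt (by omega : F.natDegree < 2*N+2)]
          ring
        · rw [coeff_eq_zero_of_natDegree_lt (by omega : F.natDegree < M),
            coeff_eq_zero_of_natDegree_lt (by omega : (Tw k^(N+1) - Sw k^(N+1)).natDegree < M)]
          ring
      obtain ⟨c0', hdeg0', hcoeff0', hsum'⟩ :=
        ih (F - C c * (Tw k^(N+1) - Sw k^(N+1))) hodd' hFdeg'
      refine ⟨C c * X^(N+1) + c0', ?_, ?_, ?_⟩
      · refine le_trans (natDegree_add_le _ _) ?_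
        refine max_le (le_trans (natDegree_mul_le) ?_) (by omega)
        rw [natDegree_C, natDegree_X_pow]; omega
      · rw [coeff_add, coeff_C_mul, coeff_X_pow, if_pos rfl,
          coeff_eq_zero_of_natDegree_lt (by omega : c0'.natDegree < N+1)]
        rw [show 2*(N+1)-1 = 2*N+1 from by omega]
        push_cast
        rw [hcdef]
        ring
      · rw [add_comp, add_comp, mul_comp, mul_comp, C_comp, C_comp, X_pow_comp, X_pow_comp]
        linear_combination hsum'

lemma small_coeff_of_bounds (r : Polynomial k) (m : ℕ)
    (hr : ∀ j, m ≤ j → r.coeff j = 0) : r.natDegree ≤ m :=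
  natDegree_le_iff_coeff_eq_zero.mpr (fun M hM => hr M (by omega))

lemma comp_deg_le (r q : Polynomial k) (n : ℕ) (hr : ∀ j, n ≤ j → r.coeff j = 0)
    (hq : q.natDegree = 2) : (r.comp q).natDegree ≤ 2*n :=
  le_trans natDegree_comp_le (by
    have := small_coeff_of_bounds k r n hr
    rw [hq]; omega)

lemma cross_coeff_zero (m n : ℕ) (hN : 1 ≤ m+n) (r B q : Polynomial k)
    (hr : ∀ j, m ≤ j → r.coeff j = 0) (hB : B.natDegree ≤ 2*n)
    (hq : q.natDegree = 2) : ((r.comp q) * B).coeff (2*(m+n)-1) = 0 := by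
  rcases Nat.eq_zero_or_pos m with hm | hm
  · have h0 : r = 0 := Polynomial.ext fun j => by simpa using hr j (by omega)
    simp [h0]
  · have hrd : r.natDegree ≤ m - 1 :=
      natDegree_le_iff_coeff_eq_zero.mpr (fun M hM => hr M (by omega))
    have h1 : (r.comp q).natDegree ≤ 2*(m-1) :=
      le_trans natDegree_comp_le (by rw [hq]; omega)
    exact coeff_eq_zero_of_natDegree_lt
      (lt_of_le_of_lt (le_trans natDegree_mul_le (add_le_add h1 hB)) (by omega))

lemma mainF_coeff (pw pw' : Polynomial k) (m n : ℕ) (hN : 1 ≤ m+n)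
    (hm : pw.natDegree ≤ m) (hn : pw'.natDegree ≤ n) :
    (pw.comp (Tw k) * pw'.comp (Sw k) - pw'.comp (Tw k) * pw.comp (Sw k)).coeff (2*(m+n)-1)
      = 2*(pw.coeff m * pw'.coeff n * ((m:k)-(n:k))) := by
  have hr : ∀ j, m ≤ j → (pw - C (pw.coeff m) * X^m).coeff j = 0 := by
    intro j hj
    rcases eq_or_lt_of_le hj with h | h
    · subst h; simp [coeff_sub, coeff_C_mul, coeff_X_pow]
    · rw [coeff_sub, coeff_C_mul, coeff_X_pow, if_neg (by omega),
        coeff_eq_zero_of_natDegree_lt (by omega : pw.natDegree < j)]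
      ring
  have hr' : ∀ j, n ≤ j → (pw' - C (pw'.coeff n) * X^n).coeff j = 0 := by
    intro j hj
    rcases eq_or_lt_of_le hj with h | h
    · subst h; simp [coeff_sub, coeff_C_mul, coeff_X_pow]
    · rw [coeff_sub, coeff_C_mul, coeff_X_pow, if_neg (by omega),
        coeff_eq_zero_of_natDegree_lt (by omega : pw'.natDegree < j)]
      ring
  have hB1 : (C (pw.coeff m) * Tw k^m).natDegree ≤ 2*m := by
    refine le_trans natDegree_mul_le ?_
    rw [natDegree_C, Tw_pow_natDegree]; omega
  have hB1' : (C (pw'.coeff n) * Tw k^n).natDegree ≤ 2*n := by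
    refine le_trans natDegree_mul_le ?_
    rw [natDegree_C, Tw_pow_natDegree]; omega
  have hB2 : (C (pw.coeff m) * Sw k^m).natDegree ≤ 2*m := by
    refine le_trans natDegree_mul_le ?_
    rw [natDegree_C, Sw_pow_natDegree]; omega
  have hB2' : (C (pw'.coeff n) * Sw k^n).natDegree ≤ 2*n := by
    refine le_trans natDegree_mul_le ?_
    rw [natDegree_C, Sw_pow_natDegree]; omega
  have hexp : pw.comp (Tw k) * pw'.comp (Sw k) - pw'.comp (Tw k) * pw.comp (Sw k)
      = C (pw.coeff m) * (C (pw'.coeff n) * (Tw k^m * Sw k^n - Tw k^n * Sw k^m))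
        + ((((pw' - C (pw'.coeff n) * X^n).comp (Sw k)) * (C (pw.coeff m) * Tw k^m)
          + ((pw - C (pw.coeff m) * X^m).comp (Tw k)) * (C (pw'.coeff n) * Sw k^n)
          + ((pw - C (pw.coeff m) * X^m).comp (Tw k)) * ((pw' - C (pw'.coeff n) * X^n).comp (Sw k)))
          - (((pw - C (pw.coeff m) * X^m).comp (Sw k)) * (C (pw'.coeff n) * Tw k^n)
            + ((pw' - C (pw'.coeff n) * X^n).comp (Tw k)) * (C (pw.coeff m) * Sw k^m)
            + ((pw' - C (pw'.coeff n) * X^n).comp (Tw k)) * ((pw - C (pw.coeff m) * X^m).comp (Sw k)))) := by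
    have h1 : pw = C (pw.coeff m) * X^m + (pw - C (pw.coeff m) * X^m) := by ring
    have h2 : pw' = C (pw'.coeff n) * X^n + (pw' - C (pw'.coeff n) * X^n) := by ring
    conv_lhs => rw [h1, h2]
    simp only [add_comp, mul_comp, C_comp, X_pow_comp, sub_comp]
    ring
  have e1 := cross_coeff_zero k n m (by omega) _ (C (pw.coeff m) * Tw k^m) (Sw k) hr' hB1 (natDegree_Sw k)
  rw [show 2*(n+m)-1 = 2*(m+n)-1 from by omega] at e1
  have e2 := cross_coeff_zero k m n hN _ (C (pw'.coeff n) * Sw k^n) (Tw k) hr hB2' (natDegree_Tw k)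
  have e3 := cross_coeff_zero k m n hN _ ((pw' - C (pw'.coeff n) * X^n).comp (Sw k)) (Tw k) hr
    (comp_deg_le k _ (Sw k) n hr' (natDegree_Sw k)) (natDegree_Tw k)
  have e4 := cross_coeff_zero k m n hN _ (C (pw'.coeff n) * Tw k^n) (Sw k) hr hB1' (natDegree_Sw k)
  have e5 := cross_coeff_zero k n m (by omega) _ (C (pw.coeff m) * Sw k^m) (Tw k) hr' hB2 (natDegree_Tw k)
  rw [show 2*(n+m)-1 = 2*(m+n)-1 from by omega] at e5
  have e6 := cross_coeff_zero k n m (by omega) _ ((pw - C (pw.coeff m) * X^m).comp (Sw k)) (Tw k) hr'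
    (comp_deg_le k _ (Sw k) m hr (natDegree_Sw k)) (natDegree_Tw k)
  rw [show 2*(n+m)-1 = 2*(m+n)-1 from by omega] at e6
  have h7 := coeff_TS_pow k n m (by omega)
  rw [show 2*(n+m)-1 = 2*(m+n)-1 from by omega] at h7
  rw [hexp]
  simp only [coeff_add, coeff_sub, coeff_C_mul]
  rw [e1, e2, e3, e4, e5, e6, coeff_TS_pow k m n hN, h7]
  ring

lemma mainF_odd (pw pw' : Polynomial k) :
    (pw.comp (Tw k) * pw'.comp (Sw k) - pw'.comp (Tw k) * pw.comp (Sw k)).comp (-X)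
      = -(pw.comp (Tw k) * pw'.comp (Sw k) - pw'.comp (Tw k) * pw.comp (Sw k)) := by
  simp only [sub_comp, mul_comp, comp_assoc, Sw_comp_neg, Tw_comp_neg]; ring

lemma compT_deg (a : Polynomial k) (d : ℕ) (h : a.natDegree ≤ d) :
    (a.comp (Tw k)).natDegree ≤ 2*d :=
  le_trans natDegree_comp_le (by rw [natDegree_Tw]; omega)

lemma compS_deg (a : Polynomial k) (d : ℕ) (h : a.natDegree ≤ d) :
    (a.comp (Sw k)).natDegree ≤ 2*d :=
  le_trans natDegree_comp_le (by rw [natDegree_Sw]; omega)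

lemma mainF_deg (pw pw' : Polynomial k) (m n : ℕ) (hm : pw.natDegree ≤ m)
    (hn : pw'.natDegree ≤ n) :
    (pw.comp (Tw k) * pw'.comp (Sw k) - pw'.comp (Tw k) * pw.comp (Sw k)).natDegree
      ≤ 2*(m+n) := by
  refine le_trans (natDegree_sub_le _ _) (max_le ?_ ?_)
  · refine le_trans natDegree_mul_le ?_
    have h1 := compT_deg k pw m hm
    have h2 := compS_deg k pw' n hn
    omega
  · refine le_trans natDegree_mul_le ?_
    have h1 := compT_deg k pw' n hn
    have h2 := compS_deg k pw m hm
    omega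

lemma mainF_reduce [CharZero k] {F : Polynomial k} {N : ℕ} (hodd : F.comp (-X) = -F)
    (hdeg : F.natDegree ≤ 2*N) (hN : 1 ≤ N) : F.natDegree ≤ 2*N-1 := by
  rw [natDegree_le_iff_coeff_eq_zero]
  intro M hM
  by_cases h : M = 2*N
  · subst h; exact even_coeff_zero k hodd (even_two_mul N)
  · exact coeff_eq_zero_of_natDegree_lt (by omega)

def qpolB : Polynomial (Polynomial k) := X^2 - C (2*X+2) * X + C (X^2 - 2*X - 3)

def theta : Polynomial (Polynomial k) →+* Polynomial k :=
  eval₂RingHom (Polynomial.aeval (Sw k)).toRingHom (Tw k)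

lemma theta_C (a : Polynomial k) : theta k (C a) = a.comp (Sw k) := by
  rw [theta, coe_eval₂RingHom, eval₂_C]; rfl

lemma theta_X : theta k (X : Polynomial (Polynomial k)) = Tw k := by
  rw [theta, coe_eval₂RingHom, eval₂_X]

lemma theta_mapC (pw : Polynomial k) : theta k (pw.map C) = pw.comp (Tw k) := by
  rw [theta, coe_eval₂RingHom, eval₂_map]
  have hcomp : ((Polynomial.aeval (Sw k)).toRingHom.comp (C : k →+* Polynomial k))
      = (C : k →+* Polynomial k) := by
    ext a
    simp [aeval_C]
  rw [hcomp]
  rfl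

lemma theta_qpolB [CharZero k] : theta k (qpolB k) = 0 := by
  unfold qpolB
  rw [map_add, map_sub, map_pow, map_mul, theta_X, theta_C, theta_C]
  have h1 : (2*X+2 : Polynomial k).comp (Sw k) = 2*Sw k + 2 := by
    simp [add_comp, mul_comp, X_comp, ofNat_comp]
  have h2 : (X^2-2*X-3 : Polynomial k).comp (Sw k) = Sw k^2 - 2*Sw k - 3 := by
    simp [sub_comp, mul_comp, X_comp, pow_comp, ofNat_comp]
  rw [h1, h2]
  linear_combination q_theta_zero k

lemma natDegree_qpolB : (qpolB k).natDegree = 2 := by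
  unfold qpolB
  compute_degree!

lemma monic_qpolB : (qpolB k).Monic := by
  have h : qpolB k = (X^2 + (C (-(2*X+2)) * X + C (X^2-2*X-3)) : Polynomial (Polynomial k)) := by
    unfold qpolB
    rw [map_neg]
    ring
  rw [h]
  apply monic_X_pow_add
  exact lt_of_le_of_lt (by compute_degree : _ ≤ (1:WithBot ℕ)) (by norm_num)

lemma theta_lin_zero [CharZero k] {r : Polynomial (Polynomial k)} (hdeg : r.natDegree ≤ 1)
    (h : theta k r = 0) : r = 0 := by
  have hr := eq_X_add_C_of_natDegree_le_one hdeg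
  rw [hr, map_add, map_mul, theta_X, theta_C, theta_C] at h
  obtain ⟨h0, h1⟩ := theta_lin_inj k (a := r.coeff 0) (b := r.coeff 1) (by linear_combination h)
  rw [hr, h0, h1]
  simp


section EvGlue
variable {R : Type} [Ring R] [Algebra k R] (D x : R)

def rmulH : Polynomial k →+* Module.End k R where
  toFun q := LinearMap.mulRight k (Polynomial.aeval D q)
  map_one' := by
    show LinearMap.mulRight k (Polynomial.aeval D 1) = 1
    rw [map_one, LinearMap.mulRight_one]; rfl
  map_mul' a b := by
    show LinearMap.mulRight k (Polynomial.aeval D (a*b)) = _ * _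
    rw [mul_comm a b, map_mul, LinearMap.mulRight_mul, Module.End.mul_eq_comp]
  map_zero' := by
    show LinearMap.mulRight k (Polynomial.aeval D 0) = 0
    rw [map_zero]; exact LinearMap.mulRight_zero_eq_zero _ _
  map_add' a b := by
    show LinearMap.mulRight k (Polynomial.aeval D (a+b)) = _ + _
    rw [map_add]; ext v; simp [mul_add]

def evE : Polynomial (Polynomial k) →+* Module.End k R :=
  eval₂RingHom' (rmulH k D) (LinearMap.mulLeft k D)
    (fun a => show Commute (rmulH k D a) (LinearMap.mulLeft k D) from (LinearMap.commute_mulLeft_right _ _).symm)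

def ev (Q : Polynomial (Polynomial k)) : R := evE k D Q x

lemma evE_X : evE k D (X : Polynomial (Polynomial k)) = LinearMap.mulLeft k D := by
  rw [evE, eval₂RingHom'_apply, eval₂_X]

lemma evE_C (a : Polynomial k) : evE k D (C a) = LinearMap.mulRight k (aeval D a) := by
  rw [evE, eval₂RingHom'_apply, eval₂_C]; rfl

lemma ev_map_C (pw : Polynomial k) : ev k D x (pw.map C) = aeval D pw * x := by
  induction pw using Polynomial.induction_on' with
  | add a b iha ihb => rw [Polynomial.map_add, ev, map_add, LinearMap.add_apply, map_add,
      add_mul, ← iha, ← ihb]; rfl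
  | monomial n a =>
      rw [Polynomial.map_monomial, ev, evE, eval₂RingHom'_apply, eval₂_monomial,
        Module.End.mul_apply, LinearMap.pow_mulLeft, LinearMap.mulLeft_apply,
        aeval_monomial]
      show D ^ n * x * aeval D (C a) = _
      rw [aeval_C, mul_assoc, ← Algebra.commutes, ← mul_assoc, ← Algebra.commutes]

lemma ev_C (a : Polynomial k) : ev k D x (C a) = x * aeval D a := by
  rw [ev, evE_C]; rfl

lemma ev_prod (pw pw' : Polynomial k) :
    ev k D x (pw.map C * C pw') = aeval D pw * x * aeval D pw' := by
  rw [mul_comm, ev, map_mul, Module.End.mul_apply]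
  have h1 : (evE k D (pw.map C)) x = aeval D pw * x := ev_map_C k D x pw
  rw [h1, evE_C]
  rfl

lemma ev_qpol_mul (hpsi : D*(D*x) - D*x*(2*D+2) + x*(D*D - 2*D - 3) = 0)
    (Q : Polynomial (Polynomial k)) :
    ev k D x (qpolB k * Q) = 0 := by
  unfold qpolB
  rw [mul_comm, ev, map_mul, Module.End.mul_apply]
  have expand : ((evE k D) (X^2 - C (2*X+2) * X + C (X^2 - 2*X - 3) : Polynomial (Polynomial k))) x
      = D*(D*x) - D*x*(2*D+2) + x*(D*D - 2*D - 3) := by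
    rw [map_add, map_sub, map_pow, map_mul, evE_X, evE_C, evE_C]
    simp only [LinearMap.add_apply, LinearMap.sub_apply, Module.End.mul_apply,
      LinearMap.pow_mulLeft, LinearMap.mulLeft_apply, LinearMap.mulRight_apply,
      map_add, map_sub, map_mul, map_pow, aeval_X, map_ofNat]
    noncomm_ring
  rw [expand, hpsi, map_zero]
lemma ev_sub (A B : Polynomial (Polynomial k)) :
    ev k D x (A - B) = ev k D x A - ev k D x B := by
  rw [ev, map_sub]; rfl

lemma ev_eq_of_theta [CharZero k]
    (hpsi : D*(D*x) - D*x*(2*D+2) + x*(D*D - 2*D - 3) = 0)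
    {A B : Polynomial (Polynomial k)} (h : theta k A = theta k B) :
    ev k D x A = ev k D x B := by
  have hmod := modByMonic_add_div (A - B) (qpolB k)
  have hrdeg : ((A - B) %ₘ qpolB k).natDegree ≤ 1 := by
    have hlt := degree_modByMonic_lt (A - B) (monic_qpolB k)
    rcases eq_or_ne ((A - B) %ₘ qpolB k) 0 with h0 | h0
    · rw [h0]; simp
    · have h2 : (qpolB k).degree = 2 := by
        rw [degree_eq_natDegree (monic_qpolB k).ne_zero, natDegree_qpolB]; rfl
      rw [h2] at hlt
      have h6 : ((A - B) %ₘ qpolB k).natDegree < 2 := by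
        rw [natDegree_lt_iff_degree_lt h0]
        exact_mod_cast hlt
      omega
  have hth : theta k ((A - B) %ₘ qpolB k) = 0 := by
    have h2 : theta k (A - B) = 0 := by rw [map_sub, h, sub_self]
    have h3 := congrArg (theta k) hmod
    rw [map_add, map_mul, theta_qpolB, zero_mul, add_zero] at h3
    rw [h3]; exact h2
  have hr0 : (A - B) %ₘ qpolB k = 0 := theta_lin_zero k hrdeg hth
  rw [hr0, zero_add] at hmod
  have h4 := ev_qpol_mul k D x hpsi ((A - B) /ₘ qpolB k)
  rw [hmod] at h4
  rw [ev_sub] at h4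
  exact sub_eq_zero.mp h4


lemma master [CharZero k]
    (hpsi : D*(D*x) - D*x*(2*D+2) + x*(D*D - 2*D - 3) = 0)
    (pw pw' : Polynomial k) (m n : ℕ) (hN : 1 ≤ m+n)
    (hm : pw.natDegree ≤ m) (hn : pw'.natDegree ≤ n) :
    ∃ pw0 : Polynomial k, pw0.natDegree ≤ m + n ∧
      pw0.coeff (m+n) = pw.coeff m * pw'.coeff n * ((m:k) - n) / ((m:k) + n) ∧
      Polynomial.aeval D pw0 * x - x * Polynomial.aeval D pw0
        = Polynomial.aeval D pw * x * Polynomial.aeval D pw'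
          - Polynomial.aeval D pw' * x * Polynomial.aeval D pw := by
  obtain ⟨c0, hdeg0, hcoeff0, hcomp0⟩ :=
    Bcore k (m+n) hN (pw.comp (Tw k) * pw'.comp (Sw k) - pw'.comp (Tw k) * pw.comp (Sw k))
      (mainF_odd k pw pw')
      (mainF_reduce k (mainF_odd k pw pw') (mainF_deg k pw pw' m n hm hn) hN)
  refine ⟨c0, hdeg0, ?_, ?_⟩
  · rw [hcoeff0, mainF_coeff k pw pw' m n hN hm hn]
    push_cast
    rw [mul_div_mul_left _ _ (two_ne_zero)]
  · have hLHS : Polynomial.aeval D c0 * x - x * Polynomial.aeval D c0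
        = ev k D x (c0.map C - C c0) := by
      rw [ev_sub, ev_map_C, ev_C]
    have hRHS : Polynomial.aeval D pw * x * Polynomial.aeval D pw'
          - Polynomial.aeval D pw' * x * Polynomial.aeval D pw
        = ev k D x (pw.map C * C pw' - pw'.map C * C pw) := by
      rw [ev_sub, ev_prod, ev_prod]
    rw [hLHS, hRHS]
    apply ev_eq_of_theta k D x hpsi
    rw [map_sub, map_sub, map_mul, map_mul, theta_mapC, theta_mapC, theta_mapC,
      theta_C, theta_C, theta_C, hcomp0]

end EvGlue

/-- For all `w, w' ∈ Z(U(sl₂))` (written as polynomials in `Δ`) there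
exists `w₀ ∈ Z(U(sl₂))` with `[w₀, x] = w·x·w' − w'·x·w` in `H_z`; moreover if
`w = c₁Δ^m + l.o.t.` and `w' = c₂Δⁿ + l.o.t.` with `m + n ≥ 1`, then `w₀` can be chosen
of the form `c₁c₂((m−n)/(m+n))Δ^{m+n} + l.o.t.`. -/
theorem central_z0_exists [IsAlgClosed k] [CharZero k] (p : Polynomial k) :
    (∀ pw pw' : Polynomial k, ∃ pw0 : Polynomial k,
        Polynomial.aeval (ΔH k p) pw0 * xH k p - xH k p * Polynomial.aeval (ΔH k p) pw0
          = Polynomial.aeval (ΔH k p) pw * xH k p * Polynomial.aeval (ΔH k p) pw'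
            - Polynomial.aeval (ΔH k p) pw' * xH k p * Polynomial.aeval (ΔH k p) pw) ∧
    (∀ (pw pw' : Polynomial k) (m n : ℕ), 1 ≤ m + n →
        pw.natDegree ≤ m → pw'.natDegree ≤ n →
        ∃ pw0 : Polynomial k,
          pw0.natDegree ≤ m + n ∧
          pw0.coeff (m + n) = pw.coeff m * pw'.coeff n * ((m : k) - n) / ((m : k) + n) ∧
          Polynomial.aeval (ΔH k p) pw0 * xH k p - xH k p * Polynomial.aeval (ΔH k p) pw0
            = Polynomial.aeval (ΔH k p) pw * xH k p * Polynomial.aeval (ΔH k p) pw'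
              - Polynomial.aeval (ΔH k p) pw' * xH k p * Polynomial.aeval (ΔH k p) pw) := by
  have hpsi : ΔH k p * (ΔH k p * xH k p) - ΔH k p * xH k p * (2 * ΔH k p + 2)
      + xH k p * (ΔH k p * ΔH k p - 2 * ΔH k p - 3) = 0 :=
    rel_psi (eH k p) (fH k p) (hH k p) (xH k p) (yH k p) (ΔH k p)
      (heH k p) (hfH k p) (efH k p) (exH k p) (eyH k p) (fxH k p) (fyH k p)
      (hxH k p) (hyH k p) (ΔH_def k p)
  constructor
  · intro pw pw'
    rcases le_or_gt 1 (pw.natDegree + pw'.natDegree) with hN | hN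
    · obtain ⟨pw0, _, _, heq⟩ := master k (ΔH k p) (xH k p) hpsi pw pw' _ _ hN le_rfl le_rfl
      exact ⟨pw0, heq⟩
    · have hm : pw.natDegree = 0 := by omega
      have hn : pw'.natDegree = 0 := by omega
      refine ⟨0, ?_⟩
      have hcomb : ∀ u v : k, algebraMap k (Hecke k p) u * xH k p * algebraMap k (Hecke k p) v
          = algebraMap k (Hecke k p) (u*v) * xH k p := by
        intro u v
        rw [mul_assoc, ← Algebra.commutes, ← mul_assoc, ← map_mul]
      rw [map_zero, zero_mul, mul_zero, sub_zero,
        eq_C_of_natDegree_le_zero hm.le, eq_C_of_natDegree_le_zero hn.le]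
      simp only [Polynomial.aeval_C]
      rw [hcomb, hcomb, mul_comm (pw'.coeff 0), sub_self]
  · intro pw pw' m n hN hm hn
    exact master k (ΔH k p) (xH k p) hpsi pw pw' m n hN hm hn


end InfHecke

end
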